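/- For every integer N ≥ 2, every configuration η ∈ Σ_N and every unoriented elementary face 𝔣 of the discrete torus Λ_N, one has ∑_{(x,y)∈f^↺} η(x)·[τ_𝔣 g(η) + τ_𝔣 g(η^{x,y})] = ∑_{(x,y)∈f^↻} η(x)·[τ_𝔣 g(η) + τ_𝔣 g(η^{x,y})], where f^↺ and f^↻ denote the anticlockwise and clockwise orientations of 𝔣 (each regarded as the cyclic sequence of four directed edges around the face). -/
import Mathlib


open Finset

/-- The two-dimensional discrete torus `Λ_N = ℤ²/Nℤ²`. -/
abbrev Torus (N : ℕ) := ZMod N × ZMod N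

/-- Particle configurations `Σ_N = {0,1}^{Λ_N}`. -/
abbrev Config (N : ℕ) := Torus N → Bool

/-- Occupation number as a real number. -/
noncomputable def bval (b : Bool) : ℝ := if b then 1 else 0

/-- The four unit directions `e¹, e², -e¹, -e²`. -/
def dvec (N : ℕ) : Fin 4 → Torus N := ![(1, 0), (0, 1), (-1, 0), (0, -1)]

/-- Reversal of a direction. -/
def rev : Fin 4 → Fin 4 := ![2, 3, 0, 1]

/-- The two coordinate unit vectors `e¹, e²`. -/
def ee (N : ℕ) : Fin 2 → Torus N := ![(1, 0), (0, 1)]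

/-- `η^{x,y}` : exchange the occupation values at `x` and `y`. -/
def swap {N : ℕ} (η : Config N) (x y : Torus N) : Config N :=
  fun z => if z = x then η y else if z = y then η x else η z

/-- Translation of configurations, `(τ_z η)(w) = η(w - z)`. -/
def trc {N : ℕ} (z : Torus N) (η : Config N) : Config N := fun w => η (w - z)

/-- Translation of functions, `(τ_z h)(η) = h(τ_{-z} η)`. -/
def trf {N : ℕ} (z : Torus N) (h : Config N → ℝ) : Config N → ℝ := fun η => h (trc (-z) η)

/-- The local function `g` on the face with lower-left corner `0`. -/
noncomputable def gfun {N : ℕ} (α : ℝ) (η : Config N) : ℝ :=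
  if η (0, 0) = true ∧ η (1, 1) = true ∧ η (1, 0) = false ∧ η (0, 1) = false then α
  else if η (1, 0) = true ∧ η (0, 1) = true ∧ η (0, 0) = false ∧ η (1, 1) = false then α
  else 0

/-- Lower-left corner of the anticlockwise face `f⁺(x, x + dvec d)` traversing the edge
according to its orientation. -/
def fplus {N : ℕ} (x : Torus N) (d : Fin 4) : Torus N :=
  ![x, x - (1, 0), x - (1, 0) - (0, 1), x - (0, 1)] d

/-- Lower-left corner of the anticlockwise face `f⁻(x, x + dvec d)` traversing the reversed
edge according to its orientation. -/
def fminus {N : ℕ} (x : Torus N) (d : Fin 4) : Torus N :=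
  ![x - (0, 1), x, x - (1, 0), x - (1, 0) - (0, 1)] d

/-- The jump rate `c_{x, x + dvec d}(η)`. -/
noncomputable def rate {N : ℕ} (α : ℝ) (η : Config N) (x : Torus N) (d : Fin 4) : ℝ :=
  bval (η x) * (1 - bval (η (x + dvec N d)))
    + bval (η x) * (trf (fplus x d) (gfun α) η - trf (fminus x d) (gfun α) η)

/-- The Bernoulli product measure `ν_ρ`. -/
noncomputable def nu {N : ℕ} [NeZero N] (ρ : ℝ) (η : Config N) : ℝ :=
  ∏ x : Torus N, if η x then ρ else 1 - ρ

/-- The generator `L_N`. -/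
noncomputable def gen {N : ℕ} [NeZero N] (α : ℝ) (F : Config N → ℝ) (η : Config N) : ℝ :=
  ∑ x : Torus N, ∑ d : Fin 4, rate α η x d * (F (swap η x (x + dvec N d)) - F η)

/-- Sum of an edge function over the four directed edges of the anticlockwise oriented face
with lower-left corner `w`. -/
noncomputable def faceCCW {N : ℕ} (F : Torus N → Fin 4 → ℝ) (w : Torus N) : ℝ :=
  F w 0 + F (w + (1, 0)) 1 + F (w + (1, 0) + (0, 1)) 2 + F (w + (0, 1)) 3

/-- Sum of an edge function over the four directed edges of the clockwise oriented face
with lower-left corner `w`. -/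
noncomputable def faceCW {N : ℕ} (F : Torus N → Fin 4 → ℝ) (w : Torus N) : ℝ :=
  F w 1 + F (w + (0, 1)) 0 + F (w + (1, 0) + (0, 1)) 3 + F (w + (1, 0)) 2

/-- the contributions of the anticlockwise and clockwise orientations of any
unoriented face coincide. -/
theorem stmt_0 (N : ℕ) [NeZero N] (hN : 2 ≤ N) (α : ℝ) (hα : |α| < 1)
    (η : Config N) (w : Torus N) :
    faceCCW (fun x d =>
        bval (η x) * (trf w (gfun α) η + trf w (gfun α) (swap η x (x + dvec N d)))) w
      = faceCW (fun x d =>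
        bval (η x) * (trf w (gfun α) η + trf w (gfun α) (swap η x (x + dvec N d)))) w := by
  haveI : Fact (1 < N) := ⟨hN⟩
  obtain ⟨u, v⟩ := w
  simp only [faceCCW, faceCW, dvec, trf, trc, gfun, swap, bval,
    Matrix.cons_val_zero, Matrix.cons_val_one, Matrix.head_cons, Matrix.cons_val_two,
    Matrix.tail_cons, Matrix.cons_val_three, Matrix.head_fin_const, Fin.isValue,
    Prod.mk_add_mk, Prod.mk.injEq, sub_neg_eq_add, zero_add, add_zero, Prod.mk_sub_mk]
  ring_nf
  have h1 : ∀ a : ZMod N, 1 + a ≠ a := fun a h => one_ne_zero (by linear_combination h)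
  have h2 : ∀ a : ZMod N, a ≠ 1 + a := fun a h => one_ne_zero (by linear_combination -h)
  simp only [h1, h2, if_true, if_false, true_and, and_true, false_and, and_false,
    ite_true, ite_false]
  cases ha : η (u, v) <;> cases hb : η (1 + u, v) <;> cases hc : η (u, 1 + v) <;>
    cases hd : η (1 + u, 1 + v) <;> simp [ha, hb, hc, hd]
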